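/- arXiv:2201.00835 — 2 statements merged into one kernel-verified Lean document; each statement's English description precedes it below -/
import Mathlib

section
/- The set PPT' is preserved by completely PPT-preserving channels: if P is a completely positive trace-preserving map from operators on H_A⊗H_B to operators on H_{A'}⊗H_{B'} such that (id⊗T)∘P∘(id⊗T) is completely positive, and σ ∈ PPT'(H_AB), then P(σ) ∈ PPT'(H_{A'B'}); that is, ‖(id⊗T)(P(σ))‖₁ ≤ ‖(id⊗T)(σ)‖₁ ≤ 1. -/
open scoped Matrix Classical ComplexOrder

namespace RainsPaper

/-- Natural matrix logarithm of a Hermitian matrix via spectral decomposition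
(with the convention `log 0 = 0` on the kernel); junk value `0` otherwise. -/
noncomputable def matLog {n : Type} [Fintype n] [DecidableEq n] (A : Matrix n n ℂ) :
    Matrix n n ℂ :=
  if hA : A.IsHermitian then
    (hA.eigenvectorUnitary : Matrix n n ℂ) *
      (Matrix.diagonal fun i => (Real.log (hA.eigenvalues i) : ℂ)) *
      (star (hA.eigenvectorUnitary : Matrix n n ℂ))
  else 0

/-- Real power of a Hermitian matrix via spectral decomposition (with the convention
`0 ^ r = 0` for `r ≠ 0`, so negative powers are taken on the support);
junk value `0` otherwise. -/
noncomputable def matPow {n : Type} [Fintype n] [DecidableEq n] (A : Matrix n n ℂ) (r : ℝ) :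
    Matrix n n ℂ :=
  if hA : A.IsHermitian then
    (hA.eigenvectorUnitary : Matrix n n ℂ) *
      (Matrix.diagonal fun i => ((hA.eigenvalues i ^ r : ℝ) : ℂ)) *
      (star (hA.eigenvectorUnitary : Matrix n n ℂ))
  else 0

/-- A state is a positive semidefinite operator with unit trace. -/
def IsState {n : Type} [Fintype n] (ρ : Matrix n n ℂ) : Prop :=
  ρ.PosSemidef ∧ ρ.trace = 1

/-- `supp ω ⊆ supp τ`, expressed (for Hermitian matrices) as `ker τ ⊆ ker ω`. -/
def SuppSubset {n : Type} [Fintype n] (ω τ : Matrix n n ℂ) : Prop :=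
  ∀ v : n → ℂ, τ.mulVec v = 0 → ω.mulVec v = 0

/-- Trace norm `‖X‖₁ = Tr √(X†X)`. -/
noncomputable def traceNorm {n : Type} [Fintype n] [DecidableEq n] (X : Matrix n n ℂ) : ℝ :=
  ((matPow (Xᴴ * X) 2⁻¹).trace).re

/-- Fidelity `F(ω,τ) = ‖√ω √τ‖₁²`. -/
noncomputable def fidelity {n : Type} [Fintype n] [DecidableEq n] (ω τ : Matrix n n ℂ) : ℝ :=
  (traceNorm (matPow ω 2⁻¹ * matPow τ 2⁻¹)) ^ 2

/-- Extended base-2 logarithm: `elog2 x = log₂ x` for `x > 0` and `-∞` for `x ≤ 0`. -/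
noncomputable def elog2 (x : ℝ) : EReal :=
  if x ≤ 0 then ⊥ else ((Real.logb 2 x : ℝ) : EReal)

/-- Quantum relative entropy `D(ω‖τ) = Tr[ω (log₂ ω - log₂ τ)]` if `supp ω ⊆ supp τ`,
and `+∞` otherwise. -/
noncomputable def qRelEnt {n : Type} [Fintype n] [DecidableEq n] (ω τ : Matrix n n ℂ) : EReal :=
  if SuppSubset ω τ then
    ((((ω * (matLog ω - matLog τ)).trace).re / Real.log 2 : ℝ) : EReal)
  else ⊤

/-- Sandwiched Rényi relative entropy
`D̃_α(ω‖τ) = (α-1)⁻¹ log₂ Tr[(τ^{(1-α)/(2α)} ω τ^{(1-α)/(2α)})^α]` when `α ∈ (0,1)`, or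
`α > 1` and `supp ω ⊆ supp τ`; `+∞` otherwise. -/
noncomputable def sandRenyi {n : Type} [Fintype n] [DecidableEq n] (α : ℝ)
    (ω τ : Matrix n n ℂ) : EReal :=
  if (0 < α ∧ α < 1) ∨ (1 < α ∧ SuppSubset ω τ) then
    (((α - 1)⁻¹ : ℝ) : EReal) *
      elog2 (((matPow (matPow τ ((1 - α) / (2 * α)) * ω * matPow τ ((1 - α) / (2 * α))) α).trace).re)
  else ⊤

/-- Petz Rényi relative entropy `D_α(ω‖τ) = (α-1)⁻¹ log₂ Tr[ω^α τ^{1-α}]` when `α ∈ (0,1)`,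
or `α > 1` and `supp ω ⊆ supp τ`; `+∞` otherwise. -/
noncomputable def petzRenyi {n : Type} [Fintype n] [DecidableEq n] (α : ℝ)
    (ω τ : Matrix n n ℂ) : EReal :=
  if (0 < α ∧ α < 1) ∨ (1 < α ∧ SuppSubset ω τ) then
    (((α - 1)⁻¹ : ℝ) : EReal) * elog2 (((matPow ω α * matPow τ (1 - α)).trace).re)
  else ⊤

/-- Geometric Rényi relative entropy `D̂_α(ω‖τ) = (α-1)⁻¹ log₂ Tr[τ (τ^{-1/2} ω τ^{-1/2})^α]`
(inverses on the support) when `α ∈ (0,1)`, or `α > 1` and `supp ω ⊆ supp τ`; `+∞` otherwise. -/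
noncomputable def geomRenyi {n : Type} [Fintype n] [DecidableEq n] (α : ℝ)
    (ω τ : Matrix n n ℂ) : EReal :=
  if (0 < α ∧ α < 1) ∨ (1 < α ∧ SuppSubset ω τ) then
    (((α - 1)⁻¹ : ℝ) : EReal) *
      elog2 (((τ * matPow (matPow τ (-2⁻¹) * ω * matPow τ (-2⁻¹)) α).trace).re)
  else ⊤

/-- Classical relative entropy `D(p‖q)`, equal to `+∞` unless `supp p ⊆ supp q`
(terms with `p x = 0` contribute zero). -/
noncomputable def cRelEnt {X : Type} [Fintype X] (p q : X → ℝ) : EReal :=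
  if ∀ x, p x ≠ 0 → q x ≠ 0 then
    ((∑ x, p x * Real.logb 2 (p x / q x) : ℝ) : EReal)
  else ⊤

/-- `p` is a probability distribution on the finite set `X`. -/
def IsProb {X : Type} [Fintype X] (p : X → ℝ) : Prop :=
  (∀ x, 0 ≤ p x) ∧ ∑ x, p x = 1

/-- The classical–quantum operator `∑ x p(x) |x⟩⟨x| ⊗ K x`. -/
noncomputable def cqOp {X A : Type} [DecidableEq X] (p : X → ℝ)
    (K : X → Matrix A A ℂ) : Matrix (X × A) (X × A) ℂ :=
  Matrix.of fun a b => if a.1 = b.1 then (p a.1 : ℂ) * K a.1 a.2 b.2 else 0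

/-- Partial transpose (on the second tensor factor):
`(id ⊗ T)(X)_{(i,k),(j,l)} = X_{(i,l),(j,k)}`. -/
def ptrans {a b : Type} (X : Matrix (a × b) (a × b) ℂ) : Matrix (a × b) (a × b) ℂ :=
  Matrix.of fun p q => X (p.1, q.2) (q.1, p.2)

/-- The partial transpose as a linear map. -/
def ptransL {a b : Type} : Matrix (a × b) (a × b) ℂ →ₗ[ℂ] Matrix (a × b) (a × b) ℂ where
  toFun := ptrans
  map_add' _ _ := rfl
  map_smul' _ _ := rfl

/-- `PPT'` : positive semidefinite bipartite operators whose partial transpose has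
trace norm at most 1. -/
def PPTprime {a b : Type} [Fintype a] [Fintype b] [DecidableEq a] [DecidableEq b]
    (σ : Matrix (a × b) (a × b) ℂ) : Prop :=
  σ.PosSemidef ∧ traceNorm (ptrans σ) ≤ 1

/-- The Rains relative entropy `R(ρ) = inf_{σ ∈ PPT'} D(ρ‖σ)`. -/
noncomputable def Rains {a b : Type} [Fintype a] [Fintype b] [DecidableEq a] [DecidableEq b]
    (ρ : Matrix (a × b) (a × b) ℂ) : EReal :=
  ⨅ σ : {σ : Matrix (a × b) (a × b) ℂ // PPTprime σ}, qRelEnt ρ σ.1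

/-- The sandwiched Rényi Rains relative entropy `R̃_α(ρ) = inf_{σ ∈ PPT'} D̃_α(ρ‖σ)`. -/
noncomputable def sandRains {a b : Type} [Fintype a] [Fintype b] [DecidableEq a] [DecidableEq b]
    (α : ℝ) (ρ : Matrix (a × b) (a × b) ℂ) : EReal :=
  ⨅ σ : {σ : Matrix (a × b) (a × b) ℂ // PPTprime σ}, sandRenyi α ρ σ.1

/-- The extension `id_{Fin k} ⊗ Φ` of a linear map on matrices. -/
def matExt {n m : Type} [Fintype n] [Fintype m]
    (Φ : Matrix n n ℂ →ₗ[ℂ] Matrix m m ℂ) (k : ℕ)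
    (X : Matrix (Fin k × n) (Fin k × n) ℂ) : Matrix (Fin k × m) (Fin k × m) ℂ :=
  Matrix.of fun p q => Φ (Matrix.of fun i j => X (p.1, i) (q.1, j)) p.2 q.2

/-- Complete positivity: all extensions `id_k ⊗ Φ` preserve positive semidefiniteness. -/
def IsCP {n m : Type} [Fintype n] [Fintype m]
    (Φ : Matrix n n ℂ →ₗ[ℂ] Matrix m m ℂ) : Prop :=
  ∀ (k : ℕ) (X : Matrix (Fin k × n) (Fin k × n) ℂ), X.PosSemidef → (matExt Φ k X).PosSemidef

/-- Trace preservation. -/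
def IsTP {n m : Type} [Fintype n] [Fintype m]
    (Φ : Matrix n n ℂ →ₗ[ℂ] Matrix m m ℂ) : Prop :=
  ∀ X : Matrix n n ℂ, (Φ X).trace = X.trace

/-- A selective PPT operation: a family of completely positive maps `P x` such that
`(id ⊗ T) ∘ P x ∘ (id ⊗ T)` is completely positive for every `x` and `∑ x, P x` is
trace preserving. -/
def IsSelectivePPT {a b a' b' X : Type} [Fintype a] [Fintype b] [Fintype a'] [Fintype b']
    [Fintype X]
    (P : X → (Matrix (a × b) (a × b) ℂ →ₗ[ℂ] Matrix (a' × b') (a' × b') ℂ)) : Prop :=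
  (∀ x, IsCP (P x)) ∧ (∀ x, IsCP (ptransL ∘ₗ P x ∘ₗ ptransL)) ∧
    (∀ ρ : Matrix (a × b) (a × b) ℂ, ∑ x, ((P x) ρ).trace = ρ.trace)

/-- The maximally entangled state `Φ^d = |Φ^d⟩⟨Φ^d|`, `|Φ^d⟩ = d^{-1/2} ∑ i |i⟩|i⟩`. -/
noncomputable def maxEnt (d : ℕ) : Matrix (Fin d × Fin d) (Fin d × Fin d) ℂ :=
  Matrix.of fun p q => if p.1 = p.2 ∧ q.1 = q.2 then ((d : ℂ))⁻¹ else 0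

/-- Binary entropy `h₂(ε) = -ε log₂ ε - (1-ε) log₂ (1-ε)`. -/
noncomputable def h2 (ε : ℝ) : ℝ :=
  -ε * Real.logb 2 ε - (1 - ε) * Real.logb 2 (1 - ε)




section Aux

variable {n m : Type} [Fintype n] [DecidableEq n] [Fintype m] [DecidableEq m]

/-- Unitary conjugation of a real diagonal matrix. -/
noncomputable def conjD (U : Matrix n n ℂ) (f : n → ℝ) : Matrix n n ℂ :=
  U * Matrix.diagonal (fun i => (f i : ℂ)) * star U

lemma spectral {Z : Matrix n n ℂ} (hZ : Z.IsHermitian) :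
    Z = conjD (hZ.eigenvectorUnitary : Matrix n n ℂ) hZ.eigenvalues := by
  conv_lhs => rw [hZ.spectral_theorem]
  rfl

lemma matPow_eq_conjD {Z : Matrix n n ℂ} (hZ : Z.IsHermitian) (r : ℝ) :
    matPow Z r = conjD (hZ.eigenvectorUnitary : Matrix n n ℂ)
      (fun i => hZ.eigenvalues i ^ r) := by
  rw [matPow, dif_pos hZ]; rfl

lemma rpow_half_mul {t : ℝ} (ht : 0 ≤ t) : t ^ (2⁻¹ : ℝ) * t ^ (2⁻¹ : ℝ) = t := by
  rw [← Real.rpow_add_of_nonneg ht (by norm_num) (by norm_num)]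
  norm_num

lemma conjD_mul' {U : Matrix n n ℂ} (hU : U ∈ Matrix.unitaryGroup n ℂ) (f g : n → ℝ) :
    conjD U f * conjD U g = conjD U (fun i => f i * g i) := by
  have h1 : star U * U = 1 := Matrix.UnitaryGroup.star_mul_self ⟨U, hU⟩
  simp only [conjD, Matrix.mul_assoc]
  rw [← Matrix.mul_assoc (star U) U, h1, Matrix.one_mul,
    ← Matrix.mul_assoc (Matrix.diagonal _), Matrix.diagonal_mul_diagonal]
  simp [Matrix.mul_assoc]

lemma conjD_psd' {U : Matrix n n ℂ} (f : n → ℝ) (hf : ∀ i, 0 ≤ f i) :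
    (conjD U f).PosSemidef := by
  rw [conjD, Matrix.star_eq_conjTranspose]
  exact (Matrix.posSemidef_diagonal_iff.mpr fun i =>
    Complex.zero_le_real.mpr (hf i)).mul_mul_conjTranspose_same U

lemma conjD_trace' {U : Matrix n n ℂ} (hU : U ∈ Matrix.unitaryGroup n ℂ) (f : n → ℝ) :
    (conjD U f).trace = ∑ i, (f i : ℂ) := by
  have h1 : star U * U = 1 := Matrix.UnitaryGroup.star_mul_self ⟨U, hU⟩
  rw [conjD, Matrix.trace_mul_cycle, h1, Matrix.one_mul, Matrix.trace_diagonal]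

lemma traceNorm_herm {Z : Matrix n n ℂ} (hZ : Z.IsHermitian) :
    traceNorm Z = ∑ i, |hZ.eigenvalues i| := by
  set U := (hZ.eigenvectorUnitary : Matrix n n ℂ) with hUdef
  have hU : U ∈ Matrix.unitaryGroup n ℂ := hZ.eigenvectorUnitary.2
  set M := Zᴴ * Z with hMdef
  have hM : M.PosSemidef := Matrix.posSemidef_conjTranspose_mul_self Z
  have hMU : (hM.1.eigenvectorUnitary : Matrix n n ℂ) ∈ Matrix.unitaryGroup n ℂ :=
    hM.1.eigenvectorUnitary.2
  set S := conjD U (fun i => |hZ.eigenvalues i|) with hSdef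
  have hSpsd : S.PosSemidef := conjD_psd' _ (fun i => abs_nonneg _)
  have hSsq : S ^ 2 = M := by
    rw [pow_two, hSdef, conjD_mul' hU, hMdef]
    have h1 : (fun i => |hZ.eigenvalues i| * |hZ.eigenvalues i|)
        = fun i => hZ.eigenvalues i * hZ.eigenvalues i := by
      funext i; rw [← abs_mul, abs_mul_self]
    rw [h1, ← conjD_mul' hU, ← spectral hZ, hZ.eq]
  have hPpsd : (matPow M 2⁻¹).PosSemidef := by
    rw [matPow_eq_conjD hM.1]
    exact conjD_psd' _ (fun i => Real.rpow_nonneg (hM.eigenvalues_nonneg i) _)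
  have hPsq : (matPow M 2⁻¹) ^ 2 = M := by
    rw [pow_two, matPow_eq_conjD hM.1, conjD_mul' hMU]
    have h1 : (fun i => hM.1.eigenvalues i ^ (2⁻¹:ℝ) * hM.1.eigenvalues i ^ (2⁻¹:ℝ))
        = hM.1.eigenvalues := by
      funext i; exact rpow_half_mul (hM.eigenvalues_nonneg i)
    rw [h1, ← spectral hM.1]
  have hkey : matPow M 2⁻¹ = S := by
    open scoped MatrixOrder in
    rw [← CFC.sqrt_unique (a := M) (by rw [← pow_two]; exact hPsq) hPpsd.nonneg,
      CFC.sqrt_unique (by rw [← pow_two]; exact hSsq) hSpsd.nonneg]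
  rw [traceNorm, ← hMdef, hkey, hSdef, conjD_trace' hU, ← Complex.ofReal_sum,
    Complex.ofReal_re]

lemma conjD_one {U : Matrix n n ℂ} (hU : U ∈ Matrix.unitaryGroup n ℂ) :
    conjD U (fun _ => 1) = 1 := by
  have h2 : U * star U = 1 := hU.2
  simp only [conjD, Complex.ofReal_one, Matrix.diagonal_one, Matrix.mul_one, h2]

lemma conjD_sub' {U : Matrix n n ℂ} (f g : n → ℝ) :
    conjD U f - conjD U g = conjD U (fun i => f i - g i) := by
  simp only [conjD]
  rw [← Matrix.sub_mul, ← Matrix.mul_sub, Matrix.diagonal_sub]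
  congr 2
  funext i
  push_cast
  ring

lemma conjD_add' {U : Matrix n n ℂ} (f g : n → ℝ) :
    conjD U f + conjD U g = conjD U (fun i => f i + g i) := by
  simp only [conjD]
  rw [← Matrix.add_mul, ← Matrix.mul_add, Matrix.diagonal_add]
  congr 2
  funext i
  push_cast
  ring

lemma psd_trace_re_nonneg {A : Matrix n n ℂ} (hA : A.PosSemidef) : 0 ≤ A.trace.re := by
  have h := conjD_trace' hA.1.eigenvectorUnitary.2 hA.1.eigenvalues
  rw [← spectral hA.1] at h
  rw [h, ← Complex.ofReal_sum, Complex.ofReal_re]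
  exact Finset.sum_nonneg fun i _ => hA.eigenvalues_nonneg i

open scoped MatrixOrder in
lemma trace_mul_psd_nonneg {A B : Matrix n n ℂ} (hA : A.PosSemidef) (hB : B.PosSemidef) :
    0 ≤ (A * B).trace.re := by
  have h1 : A * B = CFC.sqrt A * (CFC.sqrt A * B) := by
    rw [← Matrix.mul_assoc, CFC.sqrt_mul_sqrt_self A hA.nonneg]
  rw [h1, Matrix.trace_mul_comm, Matrix.mul_assoc]
  have h2 : (CFC.sqrt A * B * CFC.sqrt A).PosSemidef := by
    have := hB.mul_mul_conjTranspose_same (CFC.sqrt A)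
    rwa [(Matrix.nonneg_iff_posSemidef.mp (CFC.sqrt_nonneg A)).1.eq] at this
  rw [← Matrix.mul_assoc]
  exact psd_trace_re_nonneg h2

lemma traceNorm_le_of_decomp {Z A B : Matrix n n ℂ} (hZ : Z.IsHermitian)
    (hA : A.PosSemidef) (hB : B.PosSemidef) (h : Z = A - B) :
    traceNorm Z ≤ A.trace.re + B.trace.re := by
  set U := (hZ.eigenvectorUnitary : Matrix n n ℂ) with hUdef
  have hU : U ∈ Matrix.unitaryGroup n ℂ := hZ.eigenvectorUnitary.2
  set lam := hZ.eigenvalues with hlam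
  set s : n → ℝ := fun i => if lam i < 0 then -1 else 1 with hs
  set C := conjD U s with hC
  have hCZ : C * Z = conjD U (fun i => |lam i|) := by
    have e1 : C * Z = C * conjD U lam := by rw [← spectral hZ]
    rw [e1, hC, conjD_mul' hU]
    have hfun : (fun i => s i * lam i) = fun i => |lam i| := by
      funext i
      rw [hs]
      by_cases hi : lam i < 0
      · simp [hi, abs_of_neg hi]
      · simp [hi, abs_of_nonneg (not_lt.mp hi)]
    rw [hfun]
  have h1C : (1 - C).PosSemidef := by
    rw [← conjD_one hU, hC, conjD_sub']
    refine conjD_psd' _ fun i => ?_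
    rw [hs]; by_cases hi : lam i < 0 <;> simp [hi]
  have h2C : (1 + C).PosSemidef := by
    rw [← conjD_one hU, hC, conjD_add']
    refine conjD_psd' _ fun i => ?_
    rw [hs]; by_cases hi : lam i < 0 <;> simp [hi]
  have hCA : (C * A).trace.re ≤ A.trace.re := by
    have := trace_mul_psd_nonneg h1C hA
    rw [Matrix.sub_mul, Matrix.one_mul, Matrix.trace_sub, Complex.sub_re] at this
    linarith
  have hCB : -(C * B).trace.re ≤ B.trace.re := by
    have := trace_mul_psd_nonneg h2C hB
    rw [Matrix.add_mul, Matrix.one_mul, Matrix.trace_add, Complex.add_re] at this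
    linarith
  have hTN : traceNorm Z = (C * Z).trace.re := by
    rw [traceNorm_herm hZ, hCZ, conjD_trace' hU, ← Complex.ofReal_sum, Complex.ofReal_re]
  have hsplit : (C * Z).trace.re = (C * A).trace.re - (C * B).trace.re := by
    rw [h, Matrix.mul_sub, Matrix.trace_sub, Complex.sub_re]
  rw [hTN, hsplit]
  linarith

/-- A completely positive map is positive. -/
lemma isCP_pos (Φ : Matrix n n ℂ →ₗ[ℂ] Matrix m m ℂ) (hΦ : IsCP Φ)
    {Y : Matrix n n ℂ} (hY : Y.PosSemidef) : (Φ Y).PosSemidef := by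
  set X : Matrix (Fin 1 × n) (Fin 1 × n) ℂ := Y.submatrix Prod.snd Prod.snd with hX
  have hXpsd : X.PosSemidef := hY.submatrix Prod.snd
  have hext : matExt Φ 1 X = (Φ Y).submatrix Prod.snd Prod.snd := rfl
  have h2 := hΦ 1 X hXpsd
  rw [hext] at h2
  have h3 := h2.submatrix (fun i : m => ((0 : Fin 1), i))
  simpa using h3

lemma ptrans_ptrans {a b : Type} (X : Matrix (a × b) (a × b) ℂ) :
    ptrans (ptrans X) = X := rfl

lemma ptrans_trace {a b : Type} [Fintype a] [Fintype b]
    (X : Matrix (a × b) (a × b) ℂ) : (ptrans X).trace = X.trace := rfl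

end Aux

/-- `PPT'` is preserved by completely PPT-preserving channels:
if `P` is completely positive and trace preserving, `(id⊗T)∘P∘(id⊗T)` is completely
positive, and `σ ∈ PPT'`, then `P(σ) ∈ PPT'`; indeed
`‖(id⊗T)(P(σ))‖₁ ≤ ‖(id⊗T)(σ)‖₁ ≤ 1`. -/
theorem pptPrime_preserved {A B A' B' : Type}
    [Fintype A] [DecidableEq A] [Fintype B] [DecidableEq B]
    [Fintype A'] [DecidableEq A'] [Fintype B'] [DecidableEq B']
    (P : Matrix (A × B) (A × B) ℂ →ₗ[ℂ] Matrix (A' × B') (A' × B') ℂ)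
    (hCP : IsCP P) (hTP : IsTP P) (hPPT : IsCP (ptransL ∘ₗ P ∘ₗ ptransL))
    (σ : Matrix (A × B) (A × B) ℂ) (hσ : PPTprime σ) :
    PPTprime (P σ) ∧ traceNorm (ptrans (P σ)) ≤ traceNorm (ptrans σ) := by
  set Y := ptrans σ with hYdef
  have hYherm : Y.IsHermitian := by
    have hσh : σ.IsHermitian := hσ.1.1
    rw [Matrix.IsHermitian]
    ext p q
    simp only [Matrix.conjTranspose_apply, hYdef, ptrans, Matrix.of_apply]
    calc (starRingEnd ℂ) (σ (q.1, p.2) (p.1, q.2))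
        = σᴴ (p.1, q.2) (q.1, p.2) := rfl
      _ = σ (p.1, q.2) (q.1, p.2) := by rw [hσh.eq]
  set U := (hYherm.eigenvectorUnitary : Matrix (A × B) (A × B) ℂ) with hUdef
  have hU : U ∈ Matrix.unitaryGroup (A × B) ℂ := hYherm.eigenvectorUnitary.2
  set lam := hYherm.eigenvalues with hlam
  set Yp := conjD U (fun i => max (lam i) 0) with hYp
  set Ym := conjD U (fun i => max (-lam i) 0) with hYm
  have hYppsd : Yp.PosSemidef := conjD_psd' _ fun i => le_max_right _ _
  have hYmpsd : Ym.PosSemidef := conjD_psd' _ fun i => le_max_right _ _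
  have hdecomp : Y = Yp - Ym := by
    rw [hYp, hYm, conjD_sub']
    have h1 : (fun i => max (lam i) 0 - max (-lam i) 0) = lam := by
      funext i; exact max_zero_sub_max_neg_zero_eq_self _
    rw [h1, ← spectral hYherm]
  -- the PPT-conjugated channel
  set Γ := ptransL ∘ₗ P ∘ₗ ptransL with hΓ
  have hΓYp : (Γ Yp).PosSemidef := isCP_pos Γ hPPT hYppsd
  have hΓYm : (Γ Ym).PosSemidef := isCP_pos Γ hPPT hYmpsd
  have hPσ : ptrans (P σ) = Γ Yp - Γ Ym := by
    have h1 : ptrans (P σ) = Γ Y := by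
      show ptrans (P σ) = ptrans (P (ptrans (ptrans σ)))
      rw [ptrans_ptrans]
    rw [h1, hdecomp, map_sub]
  have hPσherm : (ptrans (P σ)).IsHermitian := by
    rw [hPσ]
    exact hΓYp.1.sub hΓYm.1
  have hΓtrace : ∀ X : Matrix (A × B) (A × B) ℂ, (Γ X).trace = X.trace := by
    intro X
    show (ptrans (P (ptrans X))).trace = X.trace
    rw [ptrans_trace, hTP, ptrans_trace]
  have hbound : traceNorm (ptrans (P σ)) ≤ traceNorm (ptrans σ) := by
    have h1 := traceNorm_le_of_decomp hPσherm hΓYp hΓYm hPσ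
    rw [hΓtrace, hΓtrace] at h1
    have h2 : traceNorm Y = Yp.trace.re + Ym.trace.re := by
      rw [traceNorm_herm hYherm, hYp, hYm, conjD_trace' hU, conjD_trace' hU,
        ← Complex.ofReal_sum, ← Complex.ofReal_sum, Complex.ofReal_re,
        Complex.ofReal_re, ← Finset.sum_add_distrib]
      refine Finset.sum_congr rfl fun i _ => ?_
      rcases le_or_gt 0 (lam i) with hi | hi
      · rw [abs_of_nonneg hi, max_eq_left hi, max_eq_right (by linarith), add_zero]
      · rw [abs_of_neg hi, max_eq_right hi.le, max_eq_left (by linarith), zero_add]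
    rw [← hYdef, h2]
    exact h1
  refine ⟨⟨isCP_pos P hCP hσ.1, le_trans hbound hσ.2⟩, hbound⟩

end RainsPaper
end

section
/- Overlap bound for PPT' operators with the maximally entangled state: for every σ ∈ PPT'(H_Â⊗H_B̂) with dim H_Â = dim H_B̂ = d, one has Tr[Φ^d σ] ≤ 1/d. -/
open scoped Matrix Classical ComplexOrder

namespace RainsPaper

-- Auxiliary lemmas -------------------------------------------------------

lemma conj_mul_conj {n : Type} [Fintype n] [DecidableEq n] (V : Matrix.unitaryGroup n ℂ)
    (f g : n → ℂ) :
    ((V : Matrix n n ℂ) * Matrix.diagonal f * star (V : Matrix n n ℂ)) *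
      ((V : Matrix n n ℂ) * Matrix.diagonal g * star (V : Matrix n n ℂ)) =
      (V : Matrix n n ℂ) * Matrix.diagonal (fun i => f i * g i) * star (V : Matrix n n ℂ) := by
  have h1 : star (V : Matrix n n ℂ) * (V : Matrix n n ℂ) = 1 := Unitary.coe_star_mul_self V
  calc (V : Matrix n n ℂ) * Matrix.diagonal f * star (V : Matrix n n ℂ) *
        ((V : Matrix n n ℂ) * Matrix.diagonal g * star (V : Matrix n n ℂ))
      = (V : Matrix n n ℂ) * (Matrix.diagonal f *
          (star (V : Matrix n n ℂ) * (V : Matrix n n ℂ)) * Matrix.diagonal g) *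
          star (V : Matrix n n ℂ) := by noncomm_ring
    _ = _ := by rw [h1, mul_one, Matrix.diagonal_mul_diagonal]

lemma conj_trace {n : Type} [Fintype n] [DecidableEq n] (V : Matrix.unitaryGroup n ℂ)
    (f : n → ℂ) :
    ((V : Matrix n n ℂ) * Matrix.diagonal f * star (V : Matrix n n ℂ)).trace = ∑ i, f i := by
  rw [Matrix.trace_mul_cycle, Unitary.coe_star_mul_self V, one_mul, Matrix.trace_diagonal]

lemma conj_posSemidef {n : Type} [Fintype n] [DecidableEq n] (V : Matrix.unitaryGroup n ℂ)
    {f : n → ℝ} (hf : ∀ i, 0 ≤ f i) :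
    ((V : Matrix n n ℂ) * Matrix.diagonal (fun i => (f i : ℂ)) *
      star (V : Matrix n n ℂ)).PosSemidef := by
  rw [Matrix.star_eq_conjTranspose]
  exact (Matrix.posSemidef_diagonal_iff.mpr fun i => by
    exact_mod_cast hf i).mul_mul_conjTranspose_same _

/-- For a Hermitian matrix, the trace norm is the sum of the absolute values of eigenvalues. -/
lemma traceNorm_hermitian {n : Type} [Fintype n] [DecidableEq n] {X : Matrix n n ℂ}
    (hX : X.IsHermitian) : traceNorm X = ∑ i, |hX.eigenvalues i| := by
  have hA : (Xᴴ * X).PosSemidef := Matrix.posSemidef_conjTranspose_mul_self X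
  have hAh : (Xᴴ * X).IsHermitian := hA.isHermitian
  set U := hX.eigenvectorUnitary
  set V := hAh.eigenvectorUnitary
  have hS : matPow (Xᴴ * X) 2⁻¹ =
      (V : Matrix n n ℂ) * Matrix.diagonal (fun i => ((hAh.eigenvalues i ^ (2⁻¹:ℝ) : ℝ) : ℂ)) *
        star (V : Matrix n n ℂ) := by
    rw [matPow, dif_pos hAh]
  set T : Matrix n n ℂ := (U : Matrix n n ℂ) *
      Matrix.diagonal (fun i => ((|hX.eigenvalues i| : ℝ) : ℂ)) * star (U : Matrix n n ℂ) with hT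
  have hSpsd : (matPow (Xᴴ * X) 2⁻¹).PosSemidef := by
    rw [hS]; exact conj_posSemidef V fun i => Real.rpow_nonneg (hA.eigenvalues_nonneg i) _
  have hTpsd : T.PosSemidef := conj_posSemidef U fun i => abs_nonneg _
  have hXX : Xᴴ * X = (U : Matrix n n ℂ) *
      Matrix.diagonal (fun i => ((hX.eigenvalues i : ℝ) : ℂ) * ((hX.eigenvalues i : ℝ) : ℂ)) *
      star (U : Matrix n n ℂ) := by
    conv_lhs => rw [hX.eq, hX.spectral_theorem, Unitary.conjStarAlgAut_apply]
    rw [conj_mul_conj]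
    rfl
  have hSsq : (matPow (Xᴴ * X) 2⁻¹) ^ 2 = Xᴴ * X := by
    have hfun : (fun i => ((hAh.eigenvalues i ^ (2⁻¹:ℝ) : ℝ) : ℂ) *
        ((hAh.eigenvalues i ^ (2⁻¹:ℝ) : ℝ) : ℂ)) = RCLike.ofReal ∘ hAh.eigenvalues := by
      funext i
      rw [← Complex.ofReal_mul, ← Real.rpow_add' (hA.eigenvalues_nonneg i) (by norm_num)]
      norm_num
    rw [sq, hS, conj_mul_conj, hfun, ← Unitary.conjStarAlgAut_apply (S := ℂ), ← hAh.spectral_theorem]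
  have hTsq : T ^ 2 = Xᴴ * X := by
    have hfun : (fun i => ((|hX.eigenvalues i| : ℝ) : ℂ) * ((|hX.eigenvalues i| : ℝ) : ℂ)) =
        fun i => ((hX.eigenvalues i : ℝ) : ℂ) * ((hX.eigenvalues i : ℝ) : ℂ) := by
      funext i
      rw [← Complex.ofReal_mul, ← Complex.ofReal_mul, abs_mul_abs_self]
    rw [sq, hT, conj_mul_conj, hfun, ← hXX]
  have hST : matPow (Xᴴ * X) 2⁻¹ = T := by
    open MatrixOrder in
    exact (CFC.sqrt_unique (a := Xᴴ * X) (by rw [← sq]; exact hSsq) hSpsd.nonneg).symm.trans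
      (CFC.sqrt_unique (by rw [← sq]; exact hTsq) hTpsd.nonneg)
  rw [traceNorm, hST, hT, conj_trace]
  rw [← Complex.ofReal_sum]
  exact Complex.ofReal_re _

/-- Entries of a unitary matrix have absolute value at most 1. -/
lemma unitary_entry_abs_le {n : Type} [Fintype n] [DecidableEq n] {W : Matrix n n ℂ}
    (hW : W * Wᴴ = 1) (i j : n) : ‖W i j‖ ≤ 1 := by
  have h := congrFun (congrFun hW i) i
  simp only [Matrix.mul_apply, Matrix.conjTranspose_apply, Matrix.one_apply_eq] at h
  have h2 : ∑ k, Complex.normSq (W i k) = 1 := by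
    have := congrArg Complex.re h
    simpa [Complex.mul_conj] using this
  have h3 : Complex.normSq (W i j) ≤ 1 := by
    rw [← h2]
    exact Finset.single_le_sum (fun k _ => Complex.normSq_nonneg _) (Finset.mem_univ j)
  rw [← Real.sqrt_one]
  exact Real.sqrt_le_sqrt h3 |>.trans_eq' (by rw [Complex.norm_def])

/-- Hölder-type bound: for unitary `F` and Hermitian `X`, `Re Tr(F X) ≤ ‖X‖₁`. -/
lemma re_trace_unitary_mul_le {n : Type} [Fintype n] [DecidableEq n]
    {F X : Matrix n n ℂ} (hF : F ∈ Matrix.unitaryGroup n ℂ) (hX : X.IsHermitian) :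
    ((F * X).trace).re ≤ traceNorm X := by
  set U := hX.eigenvectorUnitary
  set W : Matrix n n ℂ := star (U : Matrix n n ℂ) * F * (U : Matrix n n ℂ) with hWdef
  have hWu : W ∈ Matrix.unitaryGroup n ℂ :=
    mul_mem (mul_mem (Unitary.star_mem U.2) hF) U.2
  have hWW : W * Wᴴ = 1 := by
    rw [← Matrix.star_eq_conjTranspose]
    exact Matrix.mem_unitaryGroup_iff.mp hWu
  have htr : (F * X).trace = ∑ i, W i i * (hX.eigenvalues i : ℂ) := by
    conv_lhs => rw [hX.spectral_theorem, Unitary.conjStarAlgAut_apply]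
    rw [show F * ((U : Matrix n n ℂ) * Matrix.diagonal (RCLike.ofReal ∘ hX.eigenvalues) *
        star (U : Matrix n n ℂ)) = (F * (U : Matrix n n ℂ) *
        Matrix.diagonal (RCLike.ofReal ∘ hX.eigenvalues)) * star (U : Matrix n n ℂ) by
      noncomm_ring]
    rw [Matrix.trace_mul_comm, show star (U : Matrix n n ℂ) * (F * (U : Matrix n n ℂ) *
        Matrix.diagonal (RCLike.ofReal ∘ hX.eigenvalues)) =
        W * Matrix.diagonal (RCLike.ofReal ∘ hX.eigenvalues) by rw [hWdef]; noncomm_ring]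
    simp [Matrix.trace, Matrix.mul_apply, Matrix.diagonal, Function.comp]
  rw [traceNorm_hermitian hX, htr, Complex.re_sum]
  refine Finset.sum_le_sum fun i _ => ?_
  have hri : (W i i * (hX.eigenvalues i : ℂ)).re = (W i i).re * hX.eigenvalues i := by
    simp [Complex.mul_re]
  rw [hri]
  calc (W i i).re * hX.eigenvalues i ≤ |(W i i).re * hX.eigenvalues i| := le_abs_self _
    _ = |(W i i).re| * |hX.eigenvalues i| := abs_mul _ _
    _ ≤ 1 * |hX.eigenvalues i| := by
        refine mul_le_mul_of_nonneg_right ?_ (abs_nonneg _)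
        exact (Complex.abs_re_le_norm _).trans (unitary_entry_abs_le hWW i i)
    _ = |hX.eigenvalues i| := one_mul _

/-- The swap operator on `Fin d × Fin d`. -/
def swapMat (d : ℕ) : Matrix (Fin d × Fin d) (Fin d × Fin d) ℂ :=
  Matrix.of fun p q => if q = (p.2, p.1) then 1 else 0

lemma swapMat_mem (d : ℕ) : swapMat d ∈ Matrix.unitaryGroup (Fin d × Fin d) ℂ := by
  rw [Matrix.mem_unitaryGroup_iff]
  ext p q
  simp only [swapMat, Matrix.mul_apply, Matrix.star_apply, Matrix.one_apply, Matrix.of_apply,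
    Prod.ext_iff, star_one, star_zero, ite_mul, one_mul, zero_mul,
    Fintype.sum_prod_type, ite_and]
  simp [Finset.sum_ite_eq, Finset.sum_ite_eq', eq_comm, and_comm]
  split_ifs <;> simp_all

lemma ptrans_isHermitian {a b : Type} {σ : Matrix (a × b) (a × b) ℂ} (h : σ.IsHermitian) :
    (ptrans σ).IsHermitian := by
  ext p q
  simpa [ptrans, Matrix.conjTranspose_apply] using
    (congrFun (congrFun h.eq (p.1, q.2)) (q.1, p.2))

lemma maxEnt_trace_eq (d : ℕ) (σ : Matrix (Fin d × Fin d) (Fin d × Fin d) ℂ) :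
    (maxEnt d * σ).trace = (d:ℂ)⁻¹ * (swapMat d * ptrans σ).trace := by
  simp only [Matrix.trace, Matrix.diag, Matrix.mul_apply, maxEnt, swapMat, ptrans,
    Matrix.of_apply, Finset.mul_sum]
  rw [Fintype.sum_prod_type, Fintype.sum_prod_type]
  simp [Fintype.sum_prod_type, ite_and, Finset.mul_sum]

/-- Overlap bound for `PPT'` operators with the maximally entangled
state: for every `σ ∈ PPT'` on `H_Â ⊗ H_B̂` with `dim H_Â = dim H_B̂ = d`,
`Tr[Φ^d σ] ≤ 1/d`. -/
theorem maxEnt_overlap_bound {d : ℕ}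
    (σ : Matrix (Fin d × Fin d) (Fin d × Fin d) ℂ) (hσ : PPTprime σ) :
    ((maxEnt d * σ).trace).re ≤ (d : ℝ)⁻¹ := by
  have hXh : (ptrans σ).IsHermitian := ptrans_isHermitian hσ.1.isHermitian
  have hb : ((swapMat d * ptrans σ).trace).re ≤ 1 :=
    (re_trace_unitary_mul_le (swapMat_mem d) hXh).trans hσ.2
  have hc : ((d:ℂ))⁻¹ = (((d:ℝ)⁻¹ : ℝ) : ℂ) := by simp
  rw [maxEnt_trace_eq d σ, hc, Complex.re_ofReal_mul]
  calc (d:ℝ)⁻¹ * ((swapMat d * ptrans σ).trace).re ≤ (d:ℝ)⁻¹ * 1 :=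
        mul_le_mul_of_nonneg_left hb (by positivity)
    _ = (d:ℝ)⁻¹ := mul_one _

end RainsPaper
end
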